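/- Let G be a finite simple graph containing no cycle of length 5, let v be a vertex of minimum degree in G, and let x be a neighbor of v. Let {e₁, …, e_m} (m ≥ 1) be an induced matching of the graph G_x = G \ N_G[x] (obtained from G by deleting the closed neighborhood of x) such that {xv, e₁, …, e_m} is a maximal matching of G. Suppose e₁ = yz with v adjacent to y but not adjacent to z. Then G has a matching of size m + 2; in particular ν(G) ≥ m + 2. -/

import Mathlib

open scoped Classical

namespace SimpleGraph

variable {V : Type*}

/-- A set of edges of `G` forming a matching: pairwise disjoint edges of `G`. -/
def IsMatchingSet (G : SimpleGraph V) (M : Finset (Sym2 V)) : Prop :=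
  (∀ e ∈ M, e ∈ G.edgeSet) ∧
  ∀ e ∈ M, ∀ f ∈ M, e ≠ f → ∀ v : V, v ∈ e → v ∉ f

/-- An induced matching: a matching such that no edge of `G` joins two distinct
edges of the matching. -/
def IsInducedMatchingSet (G : SimpleGraph V) (M : Finset (Sym2 V)) : Prop :=
  G.IsMatchingSet M ∧
  ∀ e ∈ M, ∀ f ∈ M, e ≠ f → ∀ u v : V, u ∈ e → v ∈ f → ¬ G.Adj u v

/-- A maximal matching: a matching maximal with respect to inclusion. -/
def IsMaximalMatchingSet (G : SimpleGraph V) (M : Finset (Sym2 V)) : Prop :=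
  G.IsMatchingSet M ∧ ∀ N : Finset (Sym2 V), G.IsMatchingSet N → M ⊆ N → N = M

/-- The matching number of `G`: the maximum size of a matching. -/
noncomputable def matchingNumber [Fintype V] (G : SimpleGraph V) : ℕ :=
  sSup {n | ∃ M : Finset (Sym2 V), G.IsMatchingSet M ∧ M.card = n}

/-- The graph `G_x` obtained from `G` by deleting the closed neighborhood `N_G[x]` of `x`
(its edges are the edges of `G` with both endpoints outside `N_G[x]`). -/
def deleteClosedNbhd (G : SimpleGraph V) (x : V) : SimpleGraph V where
  Adj u w := G.Adj u w ∧ u ≠ x ∧ ¬ G.Adj x u ∧ w ≠ x ∧ ¬ G.Adj x w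
  symm := by
    constructor
    intro u w h
    exact ⟨h.1.symm, h.2.2.2.1, h.2.2.2.2, h.2.1, h.2.2.1⟩
  loopless := by
    constructor
    intro u h
    exact G.loopless.irrefl u h.1

end SimpleGraph

private lemma c5_helper {V : Type*} (G : SimpleGraph V)
    (hC5free : ¬ ∃ c : ZMod 5 → V, Function.Injective c ∧
      ∀ i : ZMod 5, G.Adj (c i) (c (i + 1)))
    (v x y z z' : V)
    (hvx : v ≠ x) (hvyne : v ≠ y) (hvzne : v ≠ z) (hxy : x ≠ y) (hxz : x ≠ z)
    (hyzne : y ≠ z) (hz'x : z' ≠ x) (hz'y : z' ≠ y) (hz'z : z' ≠ z) (hz'v : z' ≠ v)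
    (hxv : G.Adj v x) (hadj : G.Adj x z') (hzz' : G.Adj z z') (hyz : G.Adj y z)
    (hvy : G.Adj v y) : False := by
  apply hC5free
  have hinj : Function.Injective (![v, x, z', z, y] : Fin 5 → V) := by
    intro i j hij
    fin_cases i <;> fin_cases j <;>
      simp_all [hvx, hvyne, hvzne, hxy, hxz, hyzne, hz'x, hz'y, hz'z, hz'v]
  have hadj5 : ∀ i : Fin 5, G.Adj (![v, x, z', z, y] i) (![v, x, z', z, y] (i + 1)) := by
    intro i
    fin_cases i <;> simp [hxv, hadj, hzz'.symm, hyz.symm, hvy.symm]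
  exact ⟨![v, x, z', z, y], hinj, hadj5⟩

private lemma insert_matching' {V : Type*} {G : SimpleGraph V} {N : Finset (Sym2 V)} {a b : V}
    (hN : G.IsMatchingSet N) (hab : G.Adj a b)
    (h : ∀ e ∈ N, a ∉ e ∧ b ∉ e) :
    G.IsMatchingSet (insert s(a, b) N) := by
  constructor
  · intro e he
    rcases Finset.mem_insert.mp he with rfl | he
    · exact G.mem_edgeSet.mpr hab
    · exact hN.1 e he
  · intro e he f hf hef w hwe hwf
    rcases Finset.mem_insert.mp he with rfl | he' <;>
      rcases Finset.mem_insert.mp hf with rfl | hf'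
    · exact hef rfl
    · rcases Sym2.mem_iff.mp hwe with h1 | h1
      · exact (h f hf').1 (h1 ▸ hwf)
      · exact (h f hf').2 (h1 ▸ hwf)
    · rcases Sym2.mem_iff.mp hwf with h1 | h1
      · exact (h e he').1 (h1 ▸ hwe)
      · exact (h e he').2 (h1 ▸ hwe)
    · exact hN.2 e he' f hf' hef w hwe hwf

/-- Let `G` be a `C₅`-free graph, `v` a vertex of minimum degree, `x` a neighbor of `v`,
and `M = {e₁, …, e_m}` an induced matching of `G_x = G \ N_G[x]` such that `{xv} ∪ M` is a
maximal matching of `G`.  If `e₁ = yz` with `v` adjacent to `y` but not to `z`, then `G`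
has a matching of size `m + 2`; in particular `ν(G) ≥ m + 2`. -/
theorem matching_of_size_m_add_two {V : Type*} [Fintype V] (G : SimpleGraph V)
    (hC5free : ¬ ∃ c : ZMod 5 → V, Function.Injective c ∧
      ∀ i : ZMod 5, G.Adj (c i) (c (i + 1)))
    (v x y z : V)
    (hmin : ∀ u : V, (G.neighborSet v).ncard ≤ (G.neighborSet u).ncard)
    (hxv : G.Adj v x)
    (M : Finset (Sym2 V))
    (hM : (G.deleteClosedNbhd x).IsInducedMatchingSet M)
    (hmax : G.IsMaximalMatchingSet (insert s(x, v) M))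
    (he₁ : s(y, z) ∈ M)
    (hvy : G.Adj v y) (hvz : ¬ G.Adj v z) :
    (∃ N : Finset (Sym2 V), G.IsMatchingSet N ∧ N.card = M.card + 2) ∧
      M.card + 2 ≤ G.matchingNumber := by
  classical
  have hGx : ∀ e ∈ M, e ∈ (G.deleteClosedNbhd x).edgeSet := hM.1.1
  have F1 : ∀ a : V, (∃ e ∈ M, a ∈ e) → a ≠ x ∧ ¬ G.Adj x a := by
    rintro a ⟨e, heM, hae⟩
    induction e using Sym2.ind with
    | _ p q =>
      have h := (G.deleteClosedNbhd x).mem_edgeSet.mp (hGx _ heM)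
      rcases Sym2.mem_iff.mp hae with rfl | rfl
      · exact ⟨h.2.1, h.2.2.1⟩
      · exact ⟨h.2.2.2.1, h.2.2.2.2⟩
  have hMedge : ∀ e ∈ M, e ∈ G.edgeSet := by
    intro e heM
    induction e using Sym2.ind with
    | _ p q => exact G.mem_edgeSet.mpr ((G.deleteClosedNbhd x).mem_edgeSet.mp (hGx _ heM)).1
  have F2 := hM.1.2
  have F3 : ∀ e ∈ M, ∀ f ∈ M, e ≠ f → ∀ a b : V, a ∈ e → b ∈ f → ¬ G.Adj a b := by
    intro e he f hf hef a b hae hbf hadj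
    have ha := F1 a ⟨e, he, hae⟩
    have hb := F1 b ⟨f, hf, hbf⟩
    exact hM.2 e he f hf hef a b hae hbf ⟨hadj, ha.1, ha.2, hb.1, hb.2⟩
  have hyM : ∃ e ∈ M, y ∈ e := ⟨s(y, z), he₁, by simp⟩
  have hzM : ∃ e ∈ M, z ∈ e := ⟨s(y, z), he₁, by simp⟩
  have hvnot : ¬ ∃ e ∈ M, v ∈ e := fun h => (F1 v h).2 hxv.symm
  have hxnot : ¬ ∃ e ∈ M, x ∈ e := fun h => (F1 x h).1 rfl
  have hyz : G.Adj y z := G.mem_edgeSet.mp (hMedge _ he₁)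
  have hvx : v ≠ x := hxv.ne
  have hvyne : v ≠ y := hvy.ne
  have hvzne : v ≠ z := fun h => (F1 z hzM).2 (h ▸ hxv.symm)
  have hxy : x ≠ y := fun h => (F1 y hyM).1 h.symm
  have hxz : x ≠ z := fun h => (F1 z hzM).1 h.symm
  have hyzne : y ≠ z := hyz.ne
  -- every edge touches x, v, or a vertex of M
  have hmaxE : ∀ a b : V, G.Adj a b →
      a = x ∨ a = v ∨ (∃ e ∈ M, a ∈ e) ∨ b = x ∨ b = v ∨ (∃ e ∈ M, b ∈ e) := by
    intro a b hab
    by_contra hcon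
    push_neg at hcon
    obtain ⟨hax, hav, haM, hbx, hbv, hbM⟩ := hcon
    have hnew : G.IsMatchingSet (insert s(a, b) (insert s(x, v) M)) := by
      apply insert_matching' hmax.1 hab
      intro e he
      rcases Finset.mem_insert.mp he with rfl | he
      · constructor <;> simp [Sym2.mem_iff, hax, hav, hbx, hbv]
      · exact ⟨fun h => haM e he h, fun h => hbM e he h⟩
    have heq := hmax.2 _ hnew (Finset.subset_insert _ _)
    have hmem : s(a, b) ∈ insert s(x, v) M := heq ▸ Finset.mem_insert_self _ _
    rcases Finset.mem_insert.mp hmem with h | h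
    · rcases Sym2.eq_iff.mp h with ⟨h1, _⟩ | ⟨h1, _⟩
      · exact hax h1
      · exact hav h1
    · exact haM _ h (by simp)
  -- v has degree at least 2
  have hdeg2 : 2 ≤ (G.neighborSet v).ncard := by
    have hsub : ({x, y} : Set V) ⊆ G.neighborSet v := by
      rintro w hw
      rcases hw with rfl | rfl
      · exact hxv
      · exact hvy
    calc 2 = ({x, y} : Set V).ncard := (Set.ncard_pair hxy).symm
      _ ≤ _ := Set.ncard_le_ncard hsub (Set.toFinite _)
  -- existence of z'
  have hz'ex : ∃ z' : V, G.Adj z z' ∧ z' ≠ x ∧ z' ≠ v ∧ ¬ ∃ e ∈ M, z' ∈ e := by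
    by_contra hcon
    push_neg at hcon
    have hsub : G.neighborSet z ⊆ {y} := by
      intro w hw
      have hadj : G.Adj z w := hw
      have hwx : w ≠ x := fun h => (F1 z hzM).2 (h ▸ hadj).symm
      have hwv : w ≠ v := fun h => hvz (h ▸ hadj).symm
      obtain ⟨e, he, hwe⟩ := hcon w hadj hwx hwv
      by_cases hee : e = s(y, z)
      · subst hee
        rcases Sym2.mem_iff.mp hwe with rfl | rfl
        · exact Set.mem_singleton _
        · exact (G.loopless.irrefl _ hadj).elim
      · exact absurd hadj.symm (F3 e he _ he₁ hee w z hwe (by simp))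
    have h1 : (G.neighborSet z).ncard ≤ 1 := by
      simpa using Set.ncard_le_ncard hsub (Set.toFinite _)
    have h2 := hmin z
    omega
  obtain ⟨z', hzz', hz'x, hz'v, hz'M⟩ := hz'ex
  have hz'y : z' ≠ y := fun h => hz'M (by rw [h]; exact hyM)
  have hz'z : z' ≠ z := fun h => G.loopless.irrefl z (h ▸ hzz')
  -- x is not adjacent to z' (else C5: v x z' z y)
  have hxz' : ¬ G.Adj x z' := fun hadj =>
    c5_helper G hC5free v x y z z' hvx hvyne hvzne hxy hxz hyzne hz'x hz'y hz'z hz'v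
      hxv hadj hzz' hyz hvy
  -- existence of x'
  have hx'ex : ∃ x' : V, G.Adj x x' ∧ x' ≠ v := by
    by_contra hcon
    push_neg at hcon
    have hsub : G.neighborSet x ⊆ {v} := fun w hw => hcon w hw
    have h1 : (G.neighborSet x).ncard ≤ 1 := by
      simpa using Set.ncard_le_ncard hsub (Set.toFinite _)
    have h2 := hmin x
    omega
  obtain ⟨x', hxx', hx'v⟩ := hx'ex
  have hx'M : ¬ ∃ e ∈ M, x' ∈ e := fun h => (F1 x' h).2 hxx'
  have hx'z' : x' ≠ z' := fun h => hxz' (h ▸ hxx')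
  have hx'x : x' ≠ x := fun h => G.loopless.irrefl x (h ▸ hxx')
  have hx'y : x' ≠ y := fun h => hx'M (by rw [h]; exact hyM)
  have hx'z : x' ≠ z := fun h => hx'M (by rw [h]; exact hzM)
  -- the new matching
  have notmem : ∀ a : V, (¬ ∃ e ∈ M, a ∈ e) → ∀ e ∈ M.erase s(y, z), a ∉ e :=
    fun a ha e he h => ha ⟨e, Finset.mem_of_mem_erase he, h⟩
  have hynot : ∀ e ∈ M.erase s(y, z), y ∉ e := fun e he =>
    F2 s(y, z) he₁ e (Finset.mem_of_mem_erase he) (Finset.ne_of_mem_erase he).symm y (by simp)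
  have hznot : ∀ e ∈ M.erase s(y, z), z ∉ e := fun e he =>
    F2 s(y, z) he₁ e (Finset.mem_of_mem_erase he) (Finset.ne_of_mem_erase he).symm z (by simp)
  have hbase : G.IsMatchingSet (M.erase s(y, z)) := by
    constructor
    · intro e he; exact hMedge e (Finset.mem_of_mem_erase he)
    · intro e he f hf hef w hwe hwf
      exact F2 e (Finset.mem_of_mem_erase he) f (Finset.mem_of_mem_erase hf) hef w hwe hwf
  have h1 : G.IsMatchingSet (insert s(x, x') (M.erase s(y, z))) :=
    insert_matching' hbase hxx' (fun e he => ⟨notmem x hxnot e he, notmem x' hx'M e he⟩)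
  have h2 : G.IsMatchingSet (insert s(z, z') (insert s(x, x') (M.erase s(y, z)))) := by
    apply insert_matching' h1 hzz'
    intro e he
    rcases Finset.mem_insert.mp he with rfl | he
    · constructor <;> simp [Sym2.mem_iff, hxz.symm, hx'z.symm, hz'x, Ne.symm hx'z']
    · exact ⟨hznot e he, notmem z' hz'M e he⟩
  have h3 : G.IsMatchingSet
      (insert s(v, y) (insert s(z, z') (insert s(x, x') (M.erase s(y, z))))) := by
    apply insert_matching' h2 hvy
    intro e he
    rcases Finset.mem_insert.mp he with rfl | he
    · constructor <;> simp [Sym2.mem_iff, hvzne, hz'v.symm, hyzne, hz'y.symm]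
    rcases Finset.mem_insert.mp he with rfl | he
    · constructor <;> simp [Sym2.mem_iff, hvx, hx'v.symm, hxy.symm, hx'y.symm]
    · exact ⟨notmem v hvnot e he, hynot e he⟩
  -- cardinality
  have hc1 : s(x, x') ∉ M.erase s(y, z) :=
    fun h => hxnot ⟨_, Finset.mem_of_mem_erase h, by simp⟩
  have hc2 : s(z, z') ∉ insert s(x, x') (M.erase s(y, z)) := by
    intro h
    rcases Finset.mem_insert.mp h with h | h
    · rcases Sym2.eq_iff.mp h with ⟨h1, _⟩ | ⟨h1, _⟩
      · exact hxz h1.symm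
      · exact hx'z h1.symm
    · exact hznot _ h (by simp)
  have hc3 : s(v, y) ∉ insert s(z, z') (insert s(x, x') (M.erase s(y, z))) := by
    intro h
    rcases Finset.mem_insert.mp h with h | h
    · rcases Sym2.eq_iff.mp h with ⟨h1, _⟩ | ⟨h1, _⟩
      · exact hvzne h1
      · exact hz'v h1.symm
    rcases Finset.mem_insert.mp h with h | h
    · rcases Sym2.eq_iff.mp h with ⟨h1, _⟩ | ⟨h1, _⟩
      · exact hvx h1
      · exact hx'v h1.symm
    · exact hvnot ⟨_, Finset.mem_of_mem_erase h, by simp⟩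
  have hcard : (insert s(v, y) (insert s(z, z') (insert s(x, x') (M.erase s(y, z))))).card
      = M.card + 2 := by
    have h1le : 1 ≤ M.card := Finset.card_pos.mpr ⟨_, he₁⟩
    rw [Finset.card_insert_of_notMem hc3, Finset.card_insert_of_notMem hc2,
      Finset.card_insert_of_notMem hc1, Finset.card_erase_of_mem he₁]
    omega
  refine ⟨⟨_, h3, hcard⟩, ?_⟩
  have hbdd : BddAbove {n | ∃ M : Finset (Sym2 V), G.IsMatchingSet M ∧ M.card = n} := by
    refine ⟨Fintype.card (Sym2 V), ?_⟩
    rintro n ⟨M', _, rfl⟩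
    exact Finset.card_le_univ M'
  exact le_csSup hbdd ⟨_, h3, hcard⟩
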